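/- Let x and y be left I-states of size k (k-element subsets of {0,…,n−1}) that are not too far, and let [j_i+1, j_i+l_i] for 1 ≤ i ≤ n−k be the generating intervals for x and y (so j_i = max(h_i^x, h_i^y) and j_i + l_i = min(h_{i+1}^x, h_{i+1}^y)). Then the number of left I-states z of size k satisfying max(h_i^x, h_i^y) ≤ h_i^z < min(h_{i+1}^x, h_{i+1}^y) for all 1 ≤ i ≤ n−k is exactly l_1 · l_2 · ⋯ · l_{n−k}. (These z are exactly the sequences η for which the fork diagram with lower part determined by x and upper part determined by y is oriented.) -/

import Mathlib

/-- The `i`-th smallest element (0-indexed) of a finite set of natural numbers. -/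
def nthElt (s : Finset ℕ) (i : ℕ) : ℕ := (s.sort (· ≤ ·)).getD i 0

/-- The hole set of an I-state: the complement `{0, …, n} \ s`. -/
def holes (n : ℕ) (s : Finset ℕ) : Finset ℕ := Finset.range (n + 1) \ s

/-- The `i`-th hole (0-indexed): `hnth n s i` is `h_{i+1}^s` in 1-indexed notation. -/
def hnth (n : ℕ) (s : Finset ℕ) (i : ℕ) : ℕ := nthElt (holes n s) i

/-- Two I-states of size `k` are too far if `|x_i − y_i| > 1` for some `i`. -/
def TooFar (k : ℕ) (x y : Finset ℕ) : Prop :=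
  ∃ i < k, 1 < ((nthElt x i : ℤ) - (nthElt y i : ℤ)).natAbs

/-- The condition `max(h_i^x, h_i^y) ≤ h_i^z < min(h_{i+1}^x, h_{i+1}^y)` for all
`1 ≤ i ≤ n − k` (0-indexed), i.e. the fork diagram determined by `x`, `z`, `y` is oriented. -/
def OrientedZ (n k : ℕ) (x y z : Finset ℕ) : Prop :=
  ∀ i < n - k, max (hnth n x i) (hnth n y i) ≤ hnth n z i ∧
    hnth n z i < min (hnth n x (i + 1)) (hnth n y (i + 1))

instance (n k : ℕ) (x y z : Finset ℕ) : Decidable (OrientedZ n k x y z) := by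
  unfold OrientedZ; infer_instance

lemma nthElt_eq_get (s : Finset ℕ) {i : ℕ} (hi : i < s.card) :
    nthElt s i = (s.sort (· ≤ ·)).get ⟨i, by rwa [Finset.length_sort]⟩ := by
  unfold nthElt
  rw [List.getD_eq_getElem _ _ (by rwa [Finset.length_sort])]
  simp

lemma nthElt_lt_nthElt (s : Finset ℕ) {i j : ℕ} (hij : i < j) (hj : j < s.card) :
    nthElt s i < nthElt s j := by
  rw [nthElt_eq_get s (hij.trans hj), nthElt_eq_get s hj]
  exact s.sortedLT_sort.pairwise.rel_get_of_lt (by exact hij)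

lemma nthElt_le_nthElt (s : Finset ℕ) {i j : ℕ} (hij : i ≤ j) (hj : j < s.card) :
    nthElt s i ≤ nthElt s j := by
  rcases eq_or_lt_of_le hij with rfl | h
  · exact le_rfl
  · exact (nthElt_lt_nthElt s h hj).le

lemma nthElt_mem (s : Finset ℕ) {i : ℕ} (hi : i < s.card) : nthElt s i ∈ s := by
  rw [nthElt_eq_get s hi, ← Finset.mem_sort (α := ℕ) (· ≤ ·)]
  exact List.get_mem _ _

lemma image_nthElt (s : Finset ℕ) : (Finset.range s.card).image (nthElt s) = s := by
  apply Finset.Subset.antisymm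
  · intro t ht
    simp only [Finset.mem_image, Finset.mem_range] at ht
    obtain ⟨i, hi, rfl⟩ := ht
    exact nthElt_mem s hi
  · intro t ht
    rw [← Finset.mem_sort (α := ℕ) (· ≤ ·)] at ht
    obtain ⟨⟨i, hi⟩, hget⟩ := List.get_of_mem ht
    simp only [Finset.mem_image, Finset.mem_range]
    have hi' : i < s.card := by rwa [Finset.length_sort] at hi
    exact ⟨i, hi', by rw [nthElt_eq_get s hi']; exact hget⟩

lemma nthElt_toFinset (l : List ℕ) (hl : l.Pairwise (· < ·)) (i : ℕ) :
    nthElt l.toFinset i = l.getD i 0 := by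
  unfold nthElt
  rw [(List.toFinset_sort (· ≤ ·) hl.nodup).mpr (hl.imp le_of_lt)]

lemma holes_subset (n : ℕ) (s : Finset ℕ) : holes n s ⊆ Finset.range (n + 1) :=
  Finset.sdiff_subset

lemma holes_card {n k : ℕ} {s : Finset ℕ} (hs : s ⊆ Finset.range n) (hsk : s.card = k)
    (hkn : k ≤ n) : (holes n s).card = n - k + 1 := by
  unfold holes
  rw [Finset.card_sdiff_of_subset (hs.trans (Finset.range_subset_range.mpr (Nat.le_succ n)))]
  rw [Finset.card_range, hsk]; omega

lemma mem_holes_self {n : ℕ} {s : Finset ℕ} (hs : s ⊆ Finset.range n) : n ∈ holes n s := by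
  simp only [holes, Finset.mem_sdiff, Finset.mem_range]
  refine ⟨Nat.lt_succ_self n, fun h => ?_⟩
  have := hs h; simp at this

lemma hnth_last {n k : ℕ} {s : Finset ℕ} (hs : s ⊆ Finset.range n) (hsk : s.card = k)
    (hkn : k ≤ n) : hnth n s (n - k) = n := by
  have hc := holes_card hs hsk hkn
  have hmem : n ∈ holes n s := mem_holes_self hs
  conv at hmem => rw [← image_nthElt (holes n s)]
  simp only [Finset.mem_image, Finset.mem_range, hc] at hmem
  obtain ⟨i, hi, hin⟩ := hmem
  show nthElt (holes n s) (n - k) = n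
  have h1 : n ≤ nthElt (holes n s) (n - k) := by
    have := nthElt_le_nthElt (holes n s) (i := i) (j := n - k) (by omega) (by omega)
    omega
  have h2 : nthElt (holes n s) (n - k) ≤ n := by
    have hm := nthElt_mem (holes n s) (show n - k < (holes n s).card by omega)
    have := holes_subset n s hm
    simp only [Finset.mem_range] at this
    omega
  omega

lemma eq_of_holes_eq {n : ℕ} {z₁ z₂ : Finset ℕ} (h₁ : z₁ ⊆ Finset.range (n + 1))
    (h₂ : z₂ ⊆ Finset.range (n + 1)) (h : holes n z₁ = holes n z₂) : z₁ = z₂ := by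
  have e : ∀ z : Finset ℕ, z ⊆ Finset.range (n + 1) →
      Finset.range (n + 1) \ holes n z = z := by
    intro z hz
    rw [holes, sdiff_sdiff_eq_self hz]
  rw [← e z₁ h₁, ← e z₂ h₂, h]

lemma fin_strictMono_of_succ {m n : ℕ} {g : Fin m → ℕ} (hn : ∀ i, g i < n)
    (h : ∀ (i : ℕ) (hi : i + 1 < m), g ⟨i, Nat.lt_of_succ_lt hi⟩ < g ⟨i + 1, hi⟩) :
    StrictMono g := by
  set G : ℕ → ℕ := fun i => if hi : i < m then g ⟨i, hi⟩ else n + i with hG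
  have hGmono : StrictMono G := by
    apply strictMono_nat_of_lt_succ
    intro i
    by_cases h1 : i + 1 < m
    · simp only [hG]
      rw [dif_pos (Nat.lt_of_succ_lt h1), dif_pos h1]
      exact h i h1
    · by_cases h2 : i < m
      · simp only [hG]; rw [dif_pos h2, dif_neg h1]
        exact lt_of_lt_of_le (hn _) (by omega)
      · simp only [hG]; rw [dif_neg h2, dif_neg h1]; omega
  intro i j hij
  have := hGmono (show (i : ℕ) < (j : ℕ) from hij)
  simpa only [hG, dif_pos i.isLt, dif_pos j.isLt, Fin.eta] using this

lemma holes_sdiff {n m : ℕ} (g : Fin m → ℕ) (hgn : ∀ i, g i < n) :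
    holes n (Finset.range n \ Finset.image g Finset.univ)
      = (List.ofFn g ++ [n]).toFinset := by
  ext t
  simp only [holes, Finset.mem_sdiff, Finset.mem_range, Finset.mem_image, Finset.mem_univ,
    true_and, List.toFinset_append, Finset.mem_union, List.mem_toFinset, List.mem_ofFn,
    Set.mem_range, List.mem_singleton, not_and, not_not]
  constructor
  · rintro ⟨ht, h2⟩
    by_cases htn : t = n
    · right; exact htn
    · left; exact h2 (by omega)
  · rintro (⟨i, rfl⟩ | rfl)
    · exact ⟨by have := hgn i; omega, fun _ => ⟨i, rfl⟩⟩
    · exact ⟨by omega, fun h => absurd h (by omega)⟩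

lemma hnth_sdiff {n m : ℕ} (g : Fin m → ℕ) (hg : StrictMono g) (hgn : ∀ i, g i < n)
    (i : Fin m) :
    hnth n (Finset.range n \ Finset.image g Finset.univ) i = g i := by
  have hsorted : (List.ofFn g ++ [n]).Pairwise (· < ·) := by
    rw [List.pairwise_append]
    refine ⟨List.pairwise_ofFn.mpr (fun i j hij => hg hij), List.pairwise_singleton _ _, ?_⟩
    intro a ha b hb
    rw [List.mem_ofFn] at ha
    obtain ⟨j, rfl⟩ := ha
    rw [List.mem_singleton] at hb
    exact hb ▸ hgn j
  rw [hnth, holes_sdiff g hgn, nthElt_toFinset _ hsorted,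
    List.getD_append _ _ _ _ (by simp [i.isLt]),
    List.getD_eq_getElem _ _ (by simp [i.isLt])]
  simp

lemma card_sdiff_image {n m : ℕ} (g : Fin m → ℕ) (hg : StrictMono g) (hgn : ∀ i, g i < n) :
    (Finset.range n \ Finset.image g Finset.univ).card = n - m := by
  have hsub : Finset.image g Finset.univ ⊆ Finset.range n := by
    intro t ht
    simp only [Finset.mem_image] at ht
    obtain ⟨i, _, rfl⟩ := ht
    exact Finset.mem_range.mpr (hgn i)
  rw [Finset.card_sdiff_of_subset hsub, Finset.card_range,
    Finset.card_image_of_injective _ hg.injective, Finset.card_univ, Fintype.card_fin]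

/-- The number of left I-states `z` of size `k` with
`max(h_i^x, h_i^y) ≤ h_i^z < min(h_{i+1}^x, h_{i+1}^y)` for all `i` is `l_1 ⋯ l_{n−k}`,
the product of the lengths of the generating intervals between `x` and `y`. -/
theorem count_oriented (n k : ℕ) (hkn : k ≤ n) (x y : Finset ℕ)
    (hx : x ⊆ Finset.range n) (hy : y ⊆ Finset.range n)
    (hxk : x.card = k) (hyk : y.card = k) (hfar : ¬ TooFar k x y) :
    (((Finset.range n).powerset.filter
        (fun z => z.card = k ∧ OrientedZ n k x y z)).card)
      = ∏ i ∈ Finset.range (n - k),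
          (min (hnth n x (i + 1)) (hnth n y (i + 1)) - max (hnth n x i) (hnth n y i)) := by
  classical
  have hcx : (holes n x).card = n - k + 1 := holes_card hx hxk hkn
  have hcy : (holes n y).card = n - k + 1 := holes_card hy hyk hkn
  have hxlast : hnth n x (n - k) = n := hnth_last hx hxk hkn
  have hylast : hnth n y (n - k) = n := hnth_last hy hyk hkn
  have key : ((Finset.range n).powerset.filter
        (fun z => z.card = k ∧ OrientedZ n k x y z)).card
      = (Fintype.piFinset (fun i : Fin (n - k) => Finset.Ico
          (max (hnth n x i) (hnth n y i))
          (min (hnth n x ((i : ℕ) + 1)) (hnth n y ((i : ℕ) + 1))))).card := by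
    apply Finset.card_bij (fun z _ => fun i : Fin (n - k) => hnth n z (i : ℕ))
    · intro z hz
      simp only [Finset.mem_filter, Finset.mem_powerset] at hz
      obtain ⟨hzr, hzk, hor⟩ := hz
      rw [Fintype.mem_piFinset]
      intro i
      rw [Finset.mem_Ico]
      exact hor i i.isLt
    · intro z₁ hz₁ z₂ hz₂ hf
      simp only [Finset.mem_filter, Finset.mem_powerset] at hz₁ hz₂
      apply eq_of_holes_eq (hz₁.1.trans (Finset.range_subset_range.mpr (Nat.le_succ n)))
        (hz₂.1.trans (Finset.range_subset_range.mpr (Nat.le_succ n)))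
      have hc₁ : (holes n z₁).card = n - k + 1 := holes_card hz₁.1 hz₁.2.1 hkn
      have hc₂ : (holes n z₂).card = n - k + 1 := holes_card hz₂.1 hz₂.2.1 hkn
      have hl₁ : hnth n z₁ (n - k) = n := hnth_last hz₁.1 hz₁.2.1 hkn
      have hl₂ : hnth n z₂ (n - k) = n := hnth_last hz₂.1 hz₂.2.1 hkn
      rw [← image_nthElt (holes n z₁), ← image_nthElt (holes n z₂), hc₁, hc₂]
      apply Finset.image_congr
      intro i hi
      simp only [Finset.mem_coe, Finset.mem_range] at hi
      by_cases him : i < n - k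
      · exact congrFun hf ⟨i, him⟩
      · have hieq : i = n - k := by omega
        subst hieq
        show hnth n z₁ (n - k) = hnth n z₂ (n - k)
        rw [hl₁, hl₂]
    · intro g hg
      rw [Fintype.mem_piFinset] at hg
      simp only [Finset.mem_Ico] at hg
      have hxle : ∀ j, j ≤ n - k → hnth n x j ≤ n := by
        intro j hj
        have h5 := nthElt_le_nthElt (holes n x) (i := j) (j := n - k) hj (by omega)
        have h6 : nthElt (holes n x) (n - k) = n := hxlast
        show nthElt (holes n x) j ≤ n
        omega
      have hgn : ∀ i : Fin (n - k), g i < n := by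
        intro i
        have h2 := (hg i).2
        have h3 : hnth n x ((i : ℕ) + 1) ≤ n := hxle _ (by omega)
        have h4 := min_le_left (hnth n x ((i : ℕ) + 1)) (hnth n y ((i : ℕ) + 1))
        omega
      have hmono : StrictMono g := by
        apply fin_strictMono_of_succ hgn
        intro i hi
        have h1 := (hg ⟨i, Nat.lt_of_succ_lt hi⟩).2
        have h2 := (hg ⟨i + 1, hi⟩).1
        simp only at h1 h2
        have h3 := min_le_max (a := hnth n x (i + 1)) (b := hnth n y (i + 1))
        omega
      refine ⟨Finset.range n \ Finset.image g Finset.univ, ?_, ?_⟩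
      · simp only [Finset.mem_filter, Finset.mem_powerset]
        refine ⟨Finset.sdiff_subset, ?_, ?_⟩
        · rw [card_sdiff_image g hmono hgn]; omega
        · intro i him
          have hz := hnth_sdiff g hmono hgn ⟨i, him⟩
          simp only at hz
          rw [hz]
          exact hg ⟨i, him⟩
      · funext i
        exact hnth_sdiff g hmono hgn i
  rw [key, Fintype.card_piFinset]
  simp only [Nat.card_Ico]
  exact Fin.prod_univ_eq_prod_range
    (fun i => min (hnth n x (i + 1)) (hnth n y (i + 1)) - max (hnth n x i) (hnth n y i)) (n - k)
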